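/- The generalized wreath product over the pseudofactor poset P equals the direct product ∏_{ρ∈P} S_{I_ρ} (each factor acting on its own coordinates) if and only if the partial order on P is trivial, i.e. no two distinct pseudofactors are comparable. -/

import Mathlib

open Finset

namespace Hier

variable {m : ℕ}

abbrev Cell (I : Fin m → ℕ) := ∀ j, Fin (I j)

variable (I : Fin m → ℕ)

/-- standard inner product on ℚ^I -/
def dot (x y : Cell I → ℚ) : ℚ := ∑ i, x i * y i

/-- L_E: tables depending only on the coordinates in E -/
def LL (E : Finset (Fin m)) : Submodule ℚ (Cell I → ℚ) where
  carrier := {x | ∀ i i' : Cell I, (∀ j ∈ E, i j = i' j) → x i = x i'}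
  zero_mem' := by intro i i' _; rfl
  add_mem' := by
    intro a b ha hb i i' h
    simp only [Pi.add_apply, ha i i' h, hb i i' h]
  smul_mem' := by
    intro c a ha i i' h
    simp only [Pi.smul_apply, ha i i' h]

/-- orthogonal complement w.r.t. the standard inner product -/
def perp (S : Submodule ℚ (Cell I → ℚ)) : Submodule ℚ (Cell I → ℚ) where
  carrier := {y | ∀ x ∈ S, dot I x y = 0}
  zero_mem' := by intro x hx; simp [dot]
  add_mem' := by
    intro a b ha hb x hx
    have h1 := ha x hx
    have h2 := hb x hx
    simp only [dot, Pi.add_apply, mul_add, Finset.sum_add_distrib] at *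
    rw [h1, h2]; ring
  smul_mem' := by
    intro c a ha x hx
    have h1 := ha x hx
    simp only [dot, Pi.smul_apply, smul_eq_mul] at *
    calc ∑ i, x i * (c * a i) = c * ∑ i, x i * a i := by
          rw [Finset.mul_sum]; congr 1; funext i; ring
      _ = 0 := by rw [h1]; ring

/-- incremental subspace N_E -/
def NN (E : Finset (Fin m)) : Submodule ℚ (Cell I → ℚ) :=
  LL I E ⊓ perp I (⨆ j ∈ E, LL I (E.erase j))

/-- F-marginal of x evaluated at the marginal cell i_F -/
def marg (x : Cell I → ℚ) (F : Finset (Fin m)) (i : Cell I) : ℚ :=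
  ∑ j : Cell I, if ∀ k ∈ F, j k = i k then x j else 0

/-- kernel of the configuration determined by a family of facets:
tables all of whose F-marginals vanish, F ∈ Fs -/
def kern (Fs : Finset (Finset (Fin m))) : Submodule ℚ (Cell I → ℚ) where
  carrier := {y | ∀ F ∈ Fs, ∀ i, marg I y F i = 0}
  zero_mem' := by intro F hF i; simp [marg]
  add_mem' := by
    intro a b ha hb F hF i
    have h1 := ha F hF i
    have h2 := hb F hF i
    simp only [marg, Pi.add_apply] at *
    have key : (∑ j : Cell I, if ∀ k ∈ F, j k = i k then a j + b j else 0)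
        = (∑ j : Cell I, if ∀ k ∈ F, j k = i k then a j else 0)
          + (∑ j : Cell I, if ∀ k ∈ F, j k = i k then b j else 0) := by
      rw [← Finset.sum_add_distrib]
      apply Finset.sum_congr rfl
      intro j _
      split <;> simp
    rw [key, h1, h2]; ring
  smul_mem' := by
    intro c a ha F hF i
    have h1 := ha F hF i
    simp only [marg, Pi.smul_apply, smul_eq_mul] at *
    calc ∑ j : Cell I, (if ∀ k ∈ F, j k = i k then c * a j else 0)
        = c * ∑ j : Cell I, (if ∀ k ∈ F, j k = i k then a j else 0) := by
          rw [Finset.mul_sum]; congr 1; funext j; split <;> simp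
      _ = 0 := by rw [h1]; ring

/-- a (finite) abstract simplicial complex on [m] -/
def IsComplex (Δ : Finset (Finset (Fin m))) : Prop :=
  ∀ F ∈ Δ, ∀ F' ⊆ F, F' ∈ Δ

/-- the maximal elements (facets) of Δ -/
def facets (Δ : Finset (Finset (Fin m))) : Finset (Finset (Fin m)) :=
  Δ.filter (fun D => ∀ F ∈ Δ, D ⊆ F → F = D)

/-- row space of the hierarchical-model configuration A_Δ -/
def rowsp (Δ : Finset (Finset (Fin m))) : Submodule ℚ (Cell I → ℚ) :=
  ⨆ D ∈ facets Δ, LL I D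

/-- single partial difference operator ∂_j -/
def pd1 (hI : ∀ j, 0 < I j) (j : Fin m) (x : Cell I → ℚ) : Cell I → ℚ :=
  fun i => x i - x (Function.update i j ⟨0, hI j⟩)

/-- ∂_E: composition of the (commuting) ∂_j, j ∈ E -/
noncomputable def pdE (hI : ∀ j, 0 < I j) (E : Finset (Fin m)) : (Cell I → ℚ) → (Cell I → ℚ) :=
  E.toList.foldr (fun j f => pd1 I hI j ∘ f) id


/-- `fst_Δ(i)`: the facets of `Δ` containing the factor `i`. -/
def fstD (Δ : Finset (Finset (Fin m))) (i : Fin m) : Finset (Finset (Fin m)) :=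
  (facets Δ).filter (fun D => i ∈ D)

/-- `V(ρ)` for the pseudofactor class of `i`: the union of all classes `ρ' ≥ ρ`. -/
def Vp (Δ : Finset (Finset (Fin m))) (i : Fin m) : Finset (Fin m) :=
  Finset.univ.filter (fun j => fstD Δ i ⊆ fstD Δ j)

/-- the ancestor set `A(ρ)` of the pseudofactor class of `j`:
the union of the classes strictly above it. -/
def Ap (Δ : Finset (Finset (Fin m))) (j : Fin m) : Finset (Fin m) :=
  Finset.univ.filter (fun k => fstD Δ j ⊂ fstD Δ k)

/-- Membership of a permutation `g` of the cells in the generalized wreath product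
`∏_{ρ∈P} (S_{I_ρ})^{I_{A(ρ)}}` indexed by the pseudofactor poset `P`:
there is, for (each representative `j` of) each class `ρ`, a family `u j` of
permutations of the cells, depending only on the `A(ρ)`-coordinates of the argument,
fixing all coordinates outside `ρ` and acting on the `ρ`-coordinates through the
`ρ`-coordinates only (i.e. a family in `(S_{I_ρ})^{I_{A(ρ)}}`), such that `g` acts by
`(g i)_ρ = w_ρ(i_{A(ρ)}) i_ρ`. -/
def InGWP (I : Fin m → ℕ) (Δ : Finset (Finset (Fin m))) (g : Equiv.Perm (Cell I)) : Prop :=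
  ∃ u : Fin m → Cell I → Equiv.Perm (Cell I),
    (∀ j j' : Fin m, fstD Δ j = fstD Δ j' → u j = u j') ∧
    (∀ j : Fin m, ∀ i i' : Cell I, (∀ k ∈ Ap Δ j, i k = i' k) → u j i = u j i') ∧
    (∀ j : Fin m, ∀ i x : Cell I, ∀ k : Fin m, fstD Δ k ≠ fstD Δ j → u j i x k = x k) ∧
    (∀ j : Fin m, ∀ i x x' : Cell I, (∀ k, fstD Δ k = fstD Δ j → x k = x' k) →
      ∀ k, fstD Δ k = fstD Δ j → u j i x k = u j i x' k) ∧
    (∀ i : Cell I, ∀ k : Fin m, g i k = u k i i k)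

/-- Corollary 1: the generalized wreath product equals the direct product
`∏_ρ S_{I_ρ}` (permutations whose `ρ`-components depend only on `i_ρ`, for every class)
iff the pseudofactor poset has the trivial order. -/
theorem stmt19 (hI : ∀ j, 2 ≤ I j) (Δ : Finset (Finset (Fin m))) (hΔ : IsComplex Δ) :
    ({g : Equiv.Perm (Cell I) | InGWP I Δ g}
      = {g : Equiv.Perm (Cell I) | ∀ j : Fin m, ∀ i i' : Cell I,
          (∀ k, fstD Δ k = fstD Δ j → i k = i' k) →
          ∀ k, fstD Δ k = fstD Δ j → g i k = g i' k})
    ↔ (∀ i j : Fin m, fstD Δ i ⊆ fstD Δ j → fstD Δ i = fstD Δ j) := by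
  classical
  constructor
  · -- equality of sets implies trivial order
    intro h
    by_contra hcon
    push_neg at hcon
    obtain ⟨a, b, hsub, hne⟩ := hcon
    have hab : a ≠ b := fun hh => hne (by rw [hh])
    have hIa := hI a
    have hIb := hI b
    set zeroa : Fin (I a) := ⟨0, by omega⟩ with hza
    set onea : Fin (I a) := ⟨1, by omega⟩ with hoa
    set zerob : Fin (I b) := ⟨0, by omega⟩ with hzb
    set oneb : Fin (I b) := ⟨1, by omega⟩ with hob
    set σf : Cell I → Cell I :=
      fun x => Function.update x a (Equiv.swap zeroa onea (x a)) with hσf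
    have hσb : ∀ x : Cell I, σf x b = x b := by
      intro x; simp [hσf, Function.update_of_ne (Ne.symm hab)]
    have hσinv : Function.Involutive σf := by
      intro x; funext k
      by_cases hk : k = a
      · subst hk
        simp [hσf, Function.update_self]
      · simp [hσf, Function.update_of_ne hk]
    set gf : Cell I → Cell I := fun x => if x b = zerob then σf x else x with hgf
    have hginv : Function.Involutive gf := by
      intro x
      by_cases hxb : x b = zerob
      · have : σf x b = zerob := by rw [hσb]; exact hxb
        simp [hgf, hxb, this, hσinv x]
      · simp [hgf, hxb]
    set gP : Equiv.Perm (Cell I) := Function.Involutive.toPerm gf hginv with hgP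
    have hgPapp : ∀ x, gP x = gf x := fun x => rfl
    -- gP lies in the generalized wreath product
    have hIn : InGWP I Δ gP := by
      refine ⟨fun j i => if fstD Δ j = fstD Δ a ∧ i b = zerob then
          Function.Involutive.toPerm σf hσinv else Equiv.refl _, ?_, ?_, ?_, ?_, ?_⟩
      · intro j j' hjj'; funext i; simp only [hjj']
      · intro j i i' hAp
        by_cases hj : fstD Δ j = fstD Δ a
        · have hbAp : b ∈ Ap Δ j := by
            simp only [Ap, Finset.mem_filter, Finset.mem_univ, true_and, hj]
            exact hsub.ssubset_of_ne hne
          have : i b = i' b := hAp b hbAp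
          simp [hj, this]
        · simp [hj]
      · intro j i x k hk
        by_cases hcase : fstD Δ j = fstD Δ a ∧ i b = zerob
        · have hka : k ≠ a := by
            intro hka; subst hka; exact hk hcase.1.symm
          simp [hcase, hσf, Function.update_of_ne hka]
        · simp [hcase]
      · intro j i x x' hxx' k hk
        by_cases hcase : fstD Δ j = fstD Δ a ∧ i b = zerob
        · by_cases hka : k = a
          · have hxa : x k = x' k := hxx' k hk
            subst hka
            simp [hcase, hσf, Function.update_self, hxa]
          · have : x k = x' k := hxx' k hk
            simp [hcase, hσf, Function.update_of_ne hka, this]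
        · simp [hcase]
          exact hxx' k hk
      · intro i k
        rw [hgPapp]
        by_cases hib : i b = zerob
        · by_cases hk : fstD Δ k = fstD Δ a
          · simp [hgf, hib, hk]
          · have hka : k ≠ a := by
              intro hka; subst hka; exact hk rfl
            simp [hgf, hib, hk, hσf, Function.update_of_ne hka]
        · simp [hgf, hib]
    -- but gP is not in the direct product
    have hdir : gP ∈ {g : Equiv.Perm (Cell I) | ∀ j : Fin m, ∀ i i' : Cell I,
          (∀ k, fstD Δ k = fstD Δ j → i k = i' k) →
          ∀ k, fstD Δ k = fstD Δ j → g i k = g i' k} := h ▸ hIn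
    set x0 : Cell I := fun k => ⟨0, by have := hI k; omega⟩ with hx0
    set x1 : Cell I := Function.update x0 b oneb with hx1
    have hagree : ∀ k, fstD Δ k = fstD Δ a → x0 k = x1 k := by
      intro k hk
      have hkb : k ≠ b := by
        intro hkb; subst hkb; exact hne (hsub.antisymm (hk ▸ Finset.Subset.refl _))
      simp [hx1, Function.update_of_ne hkb]
    have key := hdir a x0 x1 hagree a rfl
    have hx0b : x0 b = zerob := rfl
    have hx1b : x1 b = oneb := by simp [hx1]
    have hx1bne : x1 b ≠ zerob := by
      rw [hx1b]
      intro hh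
      have : (1 : ℕ) = 0 := congrArg Fin.val hh
      omega
    have h0 : gP x0 a = onea := by
      rw [hgPapp]
      simp [hgf, hx0b, hσf, Function.update_self, hx0, hza, hoa, hzb]
    have h1 : gP x1 a = zeroa := by
      rw [hgPapp]
      have e : gf x1 = x1 := by rw [hgf]; simp [hx1bne]
      rw [e, hx1, Function.update_of_ne hab]
    rw [h0, h1] at key
    have : (1 : ℕ) = 0 := congrArg Fin.val key
    omega
  · -- trivial order implies equality
    intro htriv
    have hAp : ∀ j, Ap Δ j = ∅ := by
      intro j
      ext k
      simp only [Ap, Finset.mem_filter, Finset.mem_univ, true_and,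
        Finset.notMem_empty, iff_false]
      intro hk
      exact hk.ne (htriv j k hk.subset)
    ext g
    simp only [Set.mem_setOf_eq]
    constructor
    · rintro ⟨u, h1, h2, h3, h4, h5⟩ j i i' hii k hk
      have huk : u k i = u k i' := h2 k i i' (by simp [hAp])
      rw [h5 i k, h5 i' k, ← huk]
      exact h4 k i i i' (fun k' hk' => hii k' (hk'.trans hk)) k rfl
    · intro hg
      -- build the componentwise permutations from g
      have hinj : ∀ j : Fin m, Function.Injective
          (fun x : Cell I => fun k => if fstD Δ k = fstD Δ j then g x k else x k) := by
        intro j x x' hxx'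
        have hpt : ∀ k, (if fstD Δ k = fstD Δ j then g x k else x k)
            = (if fstD Δ k = fstD Δ j then g x' k else x' k) := fun k => congrFun hxx' k
        set c : Cell I := fun k => if fstD Δ k = fstD Δ j then x' k else x k with hc
        have hgc : g x = g c := by
          funext k
          by_cases hk : fstD Δ k = fstD Δ j
          · have e1 : g x k = g x' k := by have := hpt k; simpa [hk] using this
            have e2 : g c k = g x' k :=
              hg j c x' (fun k' hk' => by simp [hc, hk']) k hk
            rw [e1, e2]
          · exact hg k x c (fun k' hk' => by
              have : ¬ fstD Δ k' = fstD Δ j := by rw [hk']; exact hk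
              simp [hc, this]) k rfl
        have hxc : x = c := g.injective hgc
        funext k
        by_cases hk : fstD Δ k = fstD Δ j
        · have := congrFun hxc k
          simpa [hc, hk] using this
        · have := hpt k
          simpa [hk] using this
      have hbij : ∀ j : Fin m, Function.Bijective
          (fun x : Cell I => fun k => if fstD Δ k = fstD Δ j then g x k else x k) :=
        fun j => Finite.injective_iff_bijective.mp (hinj j)
      refine ⟨fun j _ => Equiv.ofBijective _ (hbij j), ?_, ?_, ?_, ?_, ?_⟩
      · intro j j' hjj'; funext i; ext x; simp [Equiv.ofBijective_apply, hjj']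
      · intro j i i' _; rfl
      · intro j i x k hk
        simp [Equiv.ofBijective_apply, hk]
      · intro j i x x' hxx' k hk
        simp only [Equiv.ofBijective_apply, hk, if_true]
        exact hg j x x' hxx' k hk
      · intro i k
        simp [Equiv.ofBijective_apply]


end Hier
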